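/- Let T > 0 and 0 < H < 1/2. Let σ²_{X^H}(t,t+h) = h^{2H} − f_t(h)²/(4T^{2H}), with f_t(h) := (t+h)^{2H} − t^{2H} − |t+h−T|^{2H} + |t−T|^{2H}, be the incremental variance of the fractional Brownian bridge on [0,T]. Then for every φ ∈ Ψ and every δ > 0 with 0 < φ(δ) ≤ T − δ, sup_{φ(δ)≤t≤T−δ} sup_{0<h≤δ} |σ²_{X^H}(t,t+h)/h^{2H} − 1| ≤ T^{−2H} δ^{2H}. -/

import Mathlib

open Real Set Filter

/-- The class Ψ of continuous functions `φ : (0,T] → [0,∞)` with `φ(h) → 0`,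
`L(h) = φ(h)/h → ∞` and `h·L(h)³ → 0` as `h ↓ 0`. -/
def MemPsi (T : ℝ) (φ : ℝ → ℝ) : Prop :=
  ContinuousOn φ (Ioc 0 T) ∧ (∀ h ∈ Ioc (0:ℝ) T, 0 ≤ φ h) ∧
  Tendsto φ (nhdsWithin 0 (Ioi 0)) (nhds 0) ∧
  Tendsto (fun h => φ h / h) (nhdsWithin 0 (Ioi 0)) atTop ∧
  Tendsto (fun h => h * (φ h / h) ^ 3) (nhdsWithin 0 (Ioi 0)) (nhds 0)

/-- The auxiliary function `f_t(h)` for the fractional Brownian bridge on `[0,T]`. -/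
noncomputable def bridgef (H T t h : ℝ) : ℝ :=
  (t + h) ^ (2*H) - t ^ (2*H) - |t + h - T| ^ (2*H) + |t - T| ^ (2*H)

/-- Incremental variance `σ²_{X^H}(t,t+h)` of the fractional Brownian bridge on `[0,T]`. -/
noncomputable def sigma2bridge (H T t h : ℝ) : ℝ :=
  h ^ (2*H) - (bridgef H T t h) ^ 2 / (4 * T ^ (2*H))

lemma my_rpow_subadd {a b p : ℝ} (ha : 0 ≤ a) (hb : 0 ≤ b) (hp : 0 ≤ p) (hp1 : p ≤ 1) :
    (a + b) ^ p ≤ a ^ p + b ^ p := by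
  have h := NNReal.rpow_add_le_add_rpow a.toNNReal b.toNNReal hp hp1
  have h2 := NNReal.coe_le_coe.2 h
  rw [← Real.toNNReal_add ha hb] at h2
  rwa [NNReal.coe_add, NNReal.coe_rpow, NNReal.coe_rpow, NNReal.coe_rpow,
    Real.coe_toNNReal _ (by linarith), Real.coe_toNNReal _ ha, Real.coe_toNNReal _ hb] at h2

/-- Quantitative (C2)-type bound for the fractional Brownian bridge,
case `0 < H < 1/2`. -/
theorem bridge_C2_bound_small (H T : ℝ) (hH : H ∈ Set.Ioo (0:ℝ) (1/2)) (hT : 0 < T)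
    (φ : ℝ → ℝ) (hφ : MemPsi T φ) (δ : ℝ) (hδ : 0 < δ)
    (hφδ : 0 < φ δ) (hφδT : φ δ ≤ T - δ) :
    (⨆ t ∈ Icc (φ δ) (T - δ), ⨆ h ∈ Ioc (0:ℝ) δ,
        |sigma2bridge H T t h / h ^ (2*H) - 1|)
      ≤ T ^ (-(2*H)) * δ ^ (2*H) := by
  obtain ⟨hH0, hH1⟩ := hH
  have hp0 : (0:ℝ) < 2*H := by linarith
  have hp1 : 2*H ≤ 1 := by linarith
  have hTp : (0:ℝ) < T ^ (2*H) := Real.rpow_pos_of_pos hT _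
  have hb : (0:ℝ) ≤ T ^ (-(2*H)) * δ ^ (2*H) := by positivity
  have key : ∀ t ∈ Icc (φ δ) (T - δ), ∀ h ∈ Ioc (0:ℝ) δ,
      |sigma2bridge H T t h / h ^ (2*H) - 1| ≤ T ^ (-(2*H)) * δ ^ (2*H) := by
    rintro t ⟨ht1, ht2⟩ h ⟨hh1, hh2⟩
    have ht0 : 0 < t := lt_of_lt_of_le hφδ ht1
    have hthT : t + h ≤ T := by linarith
    have hhp : (0:ℝ) < h ^ (2*H) := Real.rpow_pos_of_pos hh1 _
    have hfval : bridgef H T t h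
        = ((t + h) ^ (2*H) - t ^ (2*H)) + ((T - t) ^ (2*H) - (T - t - h) ^ (2*H)) := by
      unfold bridgef
      rw [abs_of_nonpos (by linarith : t + h - T ≤ 0),
          abs_of_nonpos (by linarith : t - T ≤ 0)]
      have e1 : -(t + h - T) = T - t - h := by ring
      have e2 : -(t - T) = T - t := by ring
      rw [e1, e2]; ring
    have hA : (t + h) ^ (2*H) ≤ t ^ (2*H) + h ^ (2*H) :=
      my_rpow_subadd ht0.le hh1.le hp0.le hp1
    have hB : (T - t) ^ (2*H) ≤ (T - t - h) ^ (2*H) + h ^ (2*H) := by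
      have := my_rpow_subadd (by linarith : (0:ℝ) ≤ T - t - h) hh1.le hp0.le hp1
      have e : T - t - h + h = T - t := by ring
      rwa [e] at this
    have hA0 : t ^ (2*H) ≤ (t + h) ^ (2*H) :=
      Real.rpow_le_rpow ht0.le (by linarith) hp0.le
    have hB0 : (T - t - h) ^ (2*H) ≤ (T - t) ^ (2*H) :=
      Real.rpow_le_rpow (by linarith) (by linarith) hp0.le
    have hf0 : 0 ≤ bridgef H T t h := by rw [hfval]; linarith
    have hf2 : bridgef H T t h ≤ 2 * h ^ (2*H) := by rw [hfval]; linarith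
    have hfsq : (bridgef H T t h) ^ 2 ≤ 4 * (h ^ (2*H)) ^ 2 := by nlinarith
    have hexpr : sigma2bridge H T t h / h ^ (2*H) - 1
        = -((bridgef H T t h) ^ 2 / (4 * T ^ (2*H) * h ^ (2*H))) := by
      unfold sigma2bridge
      field_simp
      ring
    rw [hexpr, abs_neg, abs_of_nonneg (by positivity)]
    calc (bridgef H T t h) ^ 2 / (4 * T ^ (2*H) * h ^ (2*H))
        ≤ (4 * (h ^ (2*H)) ^ 2) / (4 * T ^ (2*H) * h ^ (2*H)) :=
            div_le_div_of_nonneg_right hfsq (by positivity)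
      _ = h ^ (2*H) / T ^ (2*H) := by field_simp
      _ ≤ δ ^ (2*H) / T ^ (2*H) := by
            have := Real.rpow_le_rpow hh1.le hh2 hp0.le
            gcongr
      _ = T ^ (-(2*H)) * δ ^ (2*H) := by
            rw [Real.rpow_neg hT.le]; rw [div_eq_inv_mul]
  refine Real.iSup_le (fun t => Real.iSup_le (fun ht => Real.iSup_le (fun h =>
    Real.iSup_le (fun hh => key t ht h hh) hb) hb) hb) hb
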